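/- arXiv:2408.00277 — 2 statements merged into one kernel-verified Lean document; each statement's English description precedes it below -/
import Mathlib

section
/- Stochastic monotonicity of exit times for biased random walk (decreasing branch): Let 1/2 ≤ p₁ < p₂ < 1, and let S^{p₁} and S^{p₂} be biased simple random walks started at 0 with up-step probabilities p₁ and p₂ respectively. For k a positive integer, let σ_{p}^{k} = inf{n : S_n^{p} ∈ {k, -k}} be the exit time from (-k, k). Then for every n ∈ ℕ, ℙ(σ_{p₁}^{k} > n) ≥ ℙ(σ_{p₂}^{k} > n); that is, σ_{p₁}^{k} stochastically dominates σ_{p₂}^{k}. -/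
open MeasureTheory ProbabilityTheory

/-- The partial-sum (random walk) process associated to a step process `X`. -/
noncomputable def walk {Ω : Type*} (X : ℕ → Ω → ℤ) (n : ℕ) (ω : Ω) : ℤ :=
  ∑ j ∈ Finset.range n, X j ω

/-- The exit time `σ = inf {n : S_n = ±k}` of the walk from `(-k, k)`, valued in `ℕ∞`
(with `inf ∅ = ⊤`). -/
noncomputable def exitTime {Ω : Type*} (X : ℕ → Ω → ℤ) (k : ℕ) (ω : Ω) : ℕ∞ :=
  sInf {t : ℕ∞ | ∃ m : ℕ, t = (m : ℕ∞) ∧ (walk X m ω = (k : ℤ) ∨ walk X m ω = -(k : ℤ))}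

/-- `X` is a sequence of i.i.d. `±1`-valued steps with `P(X_i = 1) = p` and
`P(X_i = -1) = 1 - p`. -/
def IsBiasedWalkSteps {Ω : Type*} [MeasurableSpace Ω] (P : Measure Ω)
    (X : ℕ → Ω → ℤ) (p : ℝ) : Prop :=
  (∀ i, Measurable (X i)) ∧
  iIndepFun X P ∧
  (∀ i, P {ω | X i ω = 1} = ENNReal.ofReal p) ∧
  (∀ i, P {ω | X i ω = -1} = ENNReal.ofReal (1 - p))

namespace RWAux


noncomputable def T (p : ℝ) (k : ℕ) : ℕ → ℤ → ℝ
  | 0, x => if |x| < (k : ℤ) then 1 else 0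
  | n+1, x => if |x| < (k : ℤ) then p * T p k n (x+1) + (1-p) * T p k n (x-1) else 0

lemma T_nonneg {p : ℝ} (hp0 : 0 ≤ p) (hp1 : p ≤ 1) (k : ℕ) :
    ∀ n x, 0 ≤ T p k n x := by
  intro n
  induction n with
  | zero => intro x; simp only [T]; split <;> norm_num
  | succ n ih =>
      intro x; simp only [T]; split
      · have := ih (x+1); have := ih (x-1); nlinarith
      · norm_num

lemma T_le_one {p : ℝ} (hp0 : 0 ≤ p) (hp1 : p ≤ 1) (k : ℕ) :
    ∀ n x, T p k n x ≤ 1 := by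
  intro n
  induction n with
  | zero => intro x; simp only [T]; split <;> norm_num
  | succ n ih =>
      intro x; simp only [T]; split
      · have := ih (x+1); have := ih (x-1)
        have := T_nonneg hp0 hp1 k n (x+1); have := T_nonneg hp0 hp1 k n (x-1)
        nlinarith
      · norm_num

lemma T_eq_zero {p : ℝ} {k : ℕ} {x : ℤ} (h : ¬ |x| < (k : ℤ)) (n : ℕ) :
    T p k n x = 0 := by
  cases n <;> simp [T, h]

noncomputable def Wf (p : ℝ) (k n m : ℕ) : ℝ :=
  p^m * T p k n (m : ℤ) + (1-p)^m * T p k n (-(m : ℤ))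

noncomputable def Nf (p : ℝ) (m : ℕ) : ℝ := p^m + (1-p)^m

noncomputable def Uf (p : ℝ) (k n m : ℕ) : ℝ := Wf p k n m / Nf p m

noncomputable def rho (p : ℝ) (m : ℕ) : ℝ := Nf p (m+1) / Nf p m

lemma Nf_pos {p : ℝ} (hp0 : 0 < p) (hp1 : p < 1) (m : ℕ) : 0 < Nf p m := by
  have h1 : (0:ℝ) < p^m := pow_pos hp0 m
  have h2 : (0:ℝ) ≤ (1-p)^m := pow_nonneg (by linarith) m
  unfold Nf; linarith

lemma Wf_rec {p : ℝ} {k : ℕ} (j n : ℕ) (hjk : (j : ℤ) + 1 < (k : ℤ)) :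
    Wf p k (n+1) (j+1) = Wf p k n (j+2) + p*(1-p)*Wf p k n j := by
  have h1 : |((j:ℤ)+1)| < (k:ℤ) := by
    rw [abs_of_nonneg (by positivity)]; exact hjk
  have h2 : |(-((j:ℤ)+1))| < (k:ℤ) := by rwa [abs_neg]
  simp only [Wf, T]
  push_cast
  rw [if_pos h1, if_pos h2]
  ring

lemma Wf_rec0 {p : ℝ} {k : ℕ} (n : ℕ) (hk : 0 < k) :
    Wf p k (n+1) 0 = 2 * Wf p k n 1 := by
  have h1 : |(0:ℤ)| < (k:ℤ) := by simpa using by exact_mod_cast hk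
  simp only [Wf, T, Nat.cast_zero, neg_zero, if_pos h1]
  push_cast
  ring

lemma Wf_zero {p : ℝ} {k : ℕ} (n m : ℕ) (hm : k ≤ m) : Wf p k n m = 0 := by
  have h : ¬ |(m:ℤ)| < (k:ℤ) := by
    rw [abs_of_nonneg (by positivity)]; exact_mod_cast not_lt.2 hm
  have h2 : ¬ |(-(m:ℤ))| < (k:ℤ) := by rwa [abs_neg]
  simp [Wf, T_eq_zero h, T_eq_zero h2]

lemma Wf_nonneg {p : ℝ} (hp0 : 0 < p) (hp1 : p < 1) {k : ℕ} (n m : ℕ) :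
    0 ≤ Wf p k n m := by
  have := T_nonneg hp0.le hp1.le k n (m:ℤ)
  have := T_nonneg hp0.le hp1.le k n (-(m:ℤ))
  have h1 : (0:ℝ) ≤ p^m := by positivity
  have h2 : (0:ℝ) ≤ (1-p)^m := pow_nonneg (by linarith) m
  unfold Wf; nlinarith

lemma Uf_nonneg {p : ℝ} (hp0 : 0 < p) (hp1 : p < 1) {k : ℕ} (n m : ℕ) :
    0 ≤ Uf p k n m :=
  div_nonneg (Wf_nonneg hp0 hp1 n m) (Nf_pos hp0 hp1 m).le

lemma Uf_zero {p : ℝ} {k : ℕ} (n m : ℕ) (hm : k ≤ m) : Uf p k n m = 0 := by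
  simp [Uf, Wf_zero n m hm]

lemma Uf_base {p : ℝ} (hp0 : 0 < p) (hp1 : p < 1) {k : ℕ} (m : ℕ) :
    Uf p k 0 m = if m < k then 1 else 0 := by
  by_cases h : m < k
  · have h1 : |(m:ℤ)| < (k:ℤ) := by
      rw [abs_of_nonneg (by positivity)]; exact_mod_cast h
    have h2 : |(-(m:ℤ))| < (k:ℤ) := by rwa [abs_neg]
    simp only [Uf, Wf, T, if_pos h1, if_pos h2, if_pos h]
    rw [mul_one, mul_one]
    exact div_self (Nf_pos hp0 hp1 m).ne'
  · rw [Uf_zero 0 m (not_lt.1 h), if_neg h]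

lemma Uf_rec0 {p : ℝ} {k : ℕ} (n : ℕ) (hk : 0 < k) :
    Uf p k (n+1) 0 = Uf p k n 1 := by
  have hN0 : Nf p 0 = 2 := by norm_num [Nf]
  have hN1 : Nf p 1 = 1 := by norm_num [Nf]
  rw [Uf, Uf, Wf_rec0 n hk, hN0, hN1, div_one]
  ring

lemma Nf_succ_le {p : ℝ} (hp0 : 0 < p) (hp1 : p < 1) (m : ℕ) :
    Nf p (m+1) ≤ Nf p m := by
  have h1 : p^(m+1) ≤ p^m := pow_le_pow_of_le_one hp0.le hp1.le (Nat.le_succ m)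
  have h2 : (1-p)^(m+1) ≤ (1-p)^m :=
    pow_le_pow_of_le_one (by linarith) (by linarith) (Nat.le_succ m)
  unfold Nf; linarith

lemma rho_nonneg {p : ℝ} (hp0 : 0 < p) (hp1 : p < 1) (m : ℕ) : 0 ≤ rho p m :=
  div_nonneg (Nf_pos hp0 hp1 (m+1)).le (Nf_pos hp0 hp1 m).le

lemma rho_le_one {p : ℝ} (hp0 : 0 < p) (hp1 : p < 1) (m : ℕ) : rho p m ≤ 1 :=
  (div_le_one (Nf_pos hp0 hp1 m)).2 (Nf_succ_le hp0 hp1 m)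

lemma Uf_rec {p : ℝ} (hp0 : 0 < p) (hp1 : p < 1) {k : ℕ} (j n : ℕ)
    (hjk : (j : ℤ) + 1 < (k : ℤ)) :
    Uf p k (n+1) (j+1) =
      rho p (j+1) * Uf p k n (j+2) + (1 - rho p (j+1)) * Uf p k n j := by
  have h0 := (Nf_pos hp0 hp1 j).ne'
  have h1 := (Nf_pos hp0 hp1 (j+1)).ne'
  have h2 := (Nf_pos hp0 hp1 (j+2)).ne'
  rw [Uf, Wf_rec j n hjk, Uf, Uf, rho]
  field_simp
  simp only [Nf]
  ring

lemma rho_mono {p : ℝ} (hp0 : 0 < p) (hp1 : p < 1) (j : ℕ) :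
    rho p (j+1) ≤ rho p (j+2) := by
  have h1 := Nf_pos hp0 hp1 (j+1)
  have h2 := Nf_pos hp0 hp1 (j+2)
  rw [rho, rho, div_le_div_iff₀ h1 h2]
  simp only [show j+1+1 = j+2 from rfl, show j+2+1 = j+3 from rfl]
  have key : Nf p (j+3) * Nf p (j+1) - Nf p (j+2) * Nf p (j+2)
      = p^(j+1) * (1-p)^(j+1) * (p - (1-p))^2 := by
    simp only [Nf]; ring
  have nn : (0:ℝ) ≤ p^(j+1) * (1-p)^(j+1) * (p - (1-p))^2 := by
    have : (0:ℝ) ≤ 1 - p := by linarith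
    positivity
  linarith

lemma rho_comp {p₁ p₂ : ℝ} (h1 : 1/2 ≤ p₁) (h12 : p₁ ≤ p₂) (h2 : p₂ < 1) (m : ℕ) :
    rho p₁ (m+1) ≤ rho p₂ (m+1) := by
  have hp10 : 0 < p₁ := by linarith
  have hp11 : p₁ < 1 := by linarith
  have hp20 : 0 < p₂ := by linarith
  have hq1 : 0 ≤ 1 - p₁ := by linarith
  have hq2 : 0 ≤ 1 - p₂ := by linarith
  rw [rho, rho, div_le_div_iff₀ (Nf_pos hp10 hp11 (m+1)) (Nf_pos hp20 h2 (m+1))]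
  have key : Nf p₂ (m+2) * Nf p₁ (m+1) - Nf p₁ (m+2) * Nf p₂ (m+1)
      = (p₂ - p₁) * ((p₁*p₂)^(m+1) - ((1-p₁)*(1-p₂))^(m+1))
        + (p₁ + p₂ - 1) * ((p₂*(1-p₁))^(m+1) - (p₁*(1-p₂))^(m+1)) := by
    simp only [Nf, mul_pow]; ring
  have t1 : ((1-p₁)*(1-p₂))^(m+1) ≤ (p₁*p₂)^(m+1) := by
    apply pow_le_pow_left₀ (by positivity)
    nlinarith
  have t2 : (p₁*(1-p₂))^(m+1) ≤ (p₂*(1-p₁))^(m+1) := by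
    apply pow_le_pow_left₀ (by positivity)
    nlinarith
  nlinarith

lemma Uf_time_mono {p : ℝ} (hp0 : 0 < p) (hp1 : p < 1) {k : ℕ} (hk : 0 < k) :
    ∀ n m, Uf p k (n+1) m ≤ Uf p k n m := by
  intro n
  induction n with
  | zero =>
      intro m
      rw [Uf_base hp0 hp1]
      by_cases h : m < k
      · rw [if_pos h, Uf]
        apply div_le_one_of_le₀
        · unfold Wf Nf
          have := T_le_one hp0.le hp1.le k 1 (m:ℤ)
          have := T_le_one hp0.le hp1.le k 1 (-(m:ℤ))
          have := T_nonneg hp0.le hp1.le k 1 (m:ℤ)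
          have := T_nonneg hp0.le hp1.le k 1 (-(m:ℤ))
          have h1 : (0:ℝ) ≤ p^m := by positivity
          have h2 : (0:ℝ) ≤ (1-p)^m := pow_nonneg (by linarith) m
          nlinarith
        · exact (Nf_pos hp0 hp1 m).le
      · rw [if_neg h, Uf_zero 1 m (not_lt.1 h)]
  | succ n ih =>
      intro m
      match m with
      | 0 => rw [Uf_rec0 (n+1) hk, Uf_rec0 n hk]; exact ih 1
      | (j+1) =>
          by_cases hjk : (j:ℤ) + 1 < (k:ℤ)
          · rw [Uf_rec hp0 hp1 j (n+1) hjk, Uf_rec hp0 hp1 j n hjk]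
            have r0 := rho_nonneg hp0 hp1 (j+1)
            have r1 := rho_le_one hp0 hp1 (j+1)
            have := ih (j+2); have := ih j
            nlinarith
          · have hm : k ≤ j+1 := by
              have : (k:ℤ) ≤ (j:ℤ)+1 := not_lt.1 hjk
              exact_mod_cast this
            rw [Uf_zero _ _ hm, Uf_zero _ _ hm]

lemma Uf_space_mono {p : ℝ} (hp0 : 0 < p) (hp1 : p < 1) {k : ℕ} (hk : 0 < k) :
    ∀ n m, Uf p k n (m+1) ≤ Uf p k n m := by
  intro n
  induction n with
  | zero =>
      intro m
      rw [Uf_base hp0 hp1, Uf_base hp0 hp1]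
      by_cases h : m + 1 < k
      · rw [if_pos h, if_pos (by omega)]
      · rw [if_neg h]
        split <;> norm_num
  | succ n ih =>
      intro m
      match m with
      | 0 =>
          rw [Uf_rec0 n hk]
          exact Uf_time_mono hp0 hp1 hk n 1
      | (j+1) =>
          by_cases hjk : (j:ℤ) + 2 < (k:ℤ)
          · have hjk' : (j:ℤ) + 1 < (k:ℤ) := by linarith
            have hjk2 : ((j+1:ℕ):ℤ) + 1 < (k:ℤ) := by push_cast; linarith
            rw [show j+1+1 = (j+1)+1 from rfl, Uf_rec hp0 hp1 (j+1) n hjk2,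
              Uf_rec hp0 hp1 j n hjk']
            have r0 := rho_nonneg hp0 hp1 (j+2)
            have r1 := rho_le_one hp0 hp1 (j+2)
            have rm := rho_mono hp0 hp1 j
            have i1 := ih (j+2)
            have i2 := ih j
            have i3 := ih (j+1)
            nlinarith
          · have hm : k ≤ j+2 := by
              have : (k:ℤ) ≤ (j:ℤ)+2 := not_lt.1 hjk
              exact_mod_cast this
            rw [Uf_zero _ _ hm]
            exact Uf_nonneg hp0 hp1 _ _

lemma Uf_comp {p₁ p₂ : ℝ} (h1 : 1/2 ≤ p₁) (h12 : p₁ ≤ p₂) (h2 : p₂ < 1) {k : ℕ}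
    (hk : 0 < k) : ∀ n m, Uf p₂ k n m ≤ Uf p₁ k n m := by
  have hp10 : 0 < p₁ := by linarith
  have hp11 : p₁ < 1 := by linarith
  have hp20 : 0 < p₂ := by linarith
  intro n
  induction n with
  | zero => intro m; rw [Uf_base hp10 hp11, Uf_base hp20 h2]
  | succ n ih =>
      intro m
      match m with
      | 0 => rw [Uf_rec0 n hk, Uf_rec0 n hk]; exact ih 1
      | (j+1) =>
          by_cases hjk : (j:ℤ) + 1 < (k:ℤ)
          · rw [Uf_rec hp10 hp11 j n hjk, Uf_rec hp20 h2 j n hjk]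
            have r20 := rho_nonneg hp20 h2 (j+1)
            have r21 := rho_le_one hp20 h2 (j+1)
            have rc := rho_comp h1 h12 h2 j
            have i1 := ih (j+2)
            have i2 := ih j
            have s1 := Uf_space_mono hp10 hp11 hk n (j+1)
            have s2 := Uf_space_mono hp10 hp11 hk n j
            nlinarith
          · have hm : k ≤ j+1 := by
              have : (k:ℤ) ≤ (j:ℤ)+1 := not_lt.1 hjk
              exact_mod_cast this
            rw [Uf_zero _ _ hm, Uf_zero _ _ hm]

lemma T_comp {p₁ p₂ : ℝ} (h1 : 1/2 ≤ p₁) (h12 : p₁ ≤ p₂) (h2 : p₂ < 1) {k : ℕ}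
    (hk : 0 < k) (n : ℕ) : T p₂ k n 0 ≤ T p₁ k n 0 := by
  have key : ∀ p : ℝ, Uf p k n 0 = T p k n 0 := by
    intro p
    rw [Uf, Wf, Nf]
    norm_num
  rw [← key p₁, ← key p₂]
  exact Uf_comp h1 h12 h2 hk n 0


def stepv (b : Bool) : ℤ := if b then 1 else -1

noncomputable def wgt (p : ℝ) (b : Bool) : ℝ := if b then p else 1 - p

def psum (s : ℕ → Bool) (m : ℕ) : ℤ := ∑ j ∈ Finset.range m, stepv (s j)

def ext {n : ℕ} (t : Fin n → Bool) : ℕ → Bool :=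
  fun j => if h : j < n then t ⟨j, h⟩ else false

lemma psum_zero (s : ℕ → Bool) : psum s 0 = 0 := by simp [psum]

lemma psum_succ' (s : ℕ → Bool) (m : ℕ) :
    psum s (m+1) = stepv (s 0) + psum (fun j => s (j+1)) m := by
  rw [psum, Finset.sum_range_succ', psum, add_comm]

lemma ext_cons_zero {n : ℕ} (b : Bool) (t : Fin n → Bool) :
    ext (Fin.cons b t) 0 = b := by simp [ext]

lemma ext_cons_succ {n : ℕ} (b : Bool) (t : Fin n → Bool) (j : ℕ) :
    ext (Fin.cons b t) (j+1) = ext t j := by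
  unfold ext
  by_cases h : j < n
  · rw [dif_pos (by omega : j+1 < n+1), dif_pos h]
    have e : (⟨j+1, by omega⟩ : Fin (n+1)) = (⟨j, h⟩ : Fin n).succ := rfl
    rw [e, Fin.cons_succ]
  · rw [dif_neg (by omega), dif_neg h]

lemma psum_cons {n : ℕ} (b : Bool) (t : Fin n → Bool) (m : ℕ) :
    psum (ext (Fin.cons b t)) (m+1) = stepv b + psum (ext t) m := by
  rw [psum_succ', ext_cons_zero]
  congr 1
  unfold psum
  exact Finset.sum_congr rfl fun j _ => by simp [ext_cons_succ]

def ok (k : ℕ) (x : ℤ) (n : ℕ) (s : ℕ → Bool) : Prop :=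
  ∀ m ≤ n, |x + psum s m| < (k : ℤ)

instance (k : ℕ) (x : ℤ) (n : ℕ) (s : ℕ → Bool) : Decidable (ok k x n s) :=
  Nat.decidableBallLE n _

lemma ok_cons {k : ℕ} {x : ℤ} {n : ℕ} (b : Bool) (t : Fin n → Bool) :
    ok k x (n+1) (ext (Fin.cons b t)) ↔ (|x| < (k:ℤ) ∧ ok k (x + stepv b) n (ext t)) := by
  constructor
  · intro h
    refine ⟨by simpa [psum_zero] using h 0 (by omega), fun m hm => ?_⟩
    have := h (m+1) (by omega)
    rwa [psum_cons, ← add_assoc] at this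
  · rintro ⟨h0, h⟩ m hm
    match m with
    | 0 => simpa [psum_zero]
    | (m'+1) =>
        rw [psum_cons, ← add_assoc]
        exact h m' (by omega)

lemma sum_paths (p : ℝ) (k : ℕ) :
    ∀ (n : ℕ) (x : ℤ),
      (∑ t : Fin n → Bool,
        (∏ i ∈ Finset.range n, wgt p (ext t i)) *
          (if ok k x n (ext t) then (1:ℝ) else 0)) = T p k n x := by
  intro n
  induction n with
  | zero =>
      intro x
      rw [T]
      simp [ok, psum_zero, Finset.sum_range_zero]
  | succ n ih =>
      intro x
      rw [← Equiv.sum_comp (Fin.consEquiv (fun _ => Bool))]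
      rw [Fintype.sum_prod_type]
      have key : ∀ (b : Bool) (t : Fin n → Bool),
          (∏ i ∈ Finset.range (n+1), wgt p (ext (Fin.consEquiv (fun _ => Bool) (b, t)) i)) *
            (if ok k x (n+1) (ext (Fin.consEquiv (fun _ => Bool) (b, t))) then (1:ℝ) else 0)
          = (if |x| < (k:ℤ) then (1:ℝ) else 0) * (wgt p b *
              ((∏ i ∈ Finset.range n, wgt p (ext t i)) *
                (if ok k (x + stepv b) n (ext t) then (1:ℝ) else 0))) := by
        intro b t
        have hce : Fin.consEquiv (fun _ => Bool) (b, t) = Fin.cons b t := rfl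
        rw [hce]
        rw [Finset.prod_range_succ']
        have h0 : ext (Fin.cons b t) 0 = b := ext_cons_zero b t
        have hprod : (∏ i ∈ Finset.range n, wgt p (ext (Fin.cons b t) (i+1)))
            = ∏ i ∈ Finset.range n, wgt p (ext t i) :=
          Finset.prod_congr rfl fun i _ => by rw [ext_cons_succ]
        rw [h0, hprod]
        simp only [ok_cons]
        by_cases h1 : |x| < (k:ℤ) <;> by_cases h2 : ok k (x + stepv b) n (ext t) <;>
          simp [h1, h2] <;> ring
      simp only [key]
      rw [T]
      by_cases h1 : |x| < (k:ℤ)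
      · rw [if_pos h1]
        simp only [if_pos h1, one_mul]
        rw [Fintype.sum_bool, ← Finset.mul_sum, ← Finset.mul_sum,
          ih (x + stepv true), ih (x + stepv false)]
        rw [show wgt p true = p from rfl, show wgt p false = 1 - p from rfl,
          show stepv true = 1 from rfl, show stepv false = -1 from rfl,
          show x + -1 = x - 1 by ring]
      · rw [if_neg h1]
        simp [if_neg h1]


lemma wgt_nonneg {p : ℝ} (hp0 : 0 ≤ p) (hp1 : p ≤ 1) (b : Bool) : 0 ≤ wgt p b := by
  cases b <;> simp [wgt] <;> linarith

lemma exitTime_gt_iff {Ω : Type*} (X : ℕ → Ω → ℤ) (k n : ℕ) (ω : Ω) :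
    (n : ℕ∞) < exitTime X k ω ↔
      ∀ m ≤ n, ¬(walk X m ω = (k : ℤ) ∨ walk X m ω = -(k : ℤ)) := by
  constructor
  · intro h m hm hc
    have h1 : exitTime X k ω ≤ (m : ℕ∞) := sInf_le ⟨m, rfl, hc⟩
    have h2 : (n : ℕ∞) < (m : ℕ∞) := lt_of_lt_of_le h h1
    exact absurd (Nat.cast_lt.1 h2) (not_lt.2 hm)
  · intro h
    have hle : ((n+1 : ℕ) : ℕ∞) ≤ exitTime X k ω := by
      apply le_sInf
      rintro t ⟨m, rfl, hc⟩
      have : ¬ m ≤ n := fun hm => h m hm hc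
      exact_mod_cast Nat.succ_le_of_lt (not_le.1 this)
    exact lt_of_lt_of_le (by exact_mod_cast Nat.lt_succ_self n) hle

lemma psum_ok {k : ℕ} (hk : 0 < k) (s : ℕ → Bool) (n : ℕ)
    (h : ∀ m ≤ n, ¬(psum s m = (k : ℤ) ∨ psum s m = -(k : ℤ))) : ok k 0 n s := by
  intro m hm
  rw [zero_add]
  induction m with
  | zero =>
      simp only [psum, Finset.sum_range_zero, abs_zero]
      exact_mod_cast hk
  | succ m ihm =>
      have h1 : |psum s m| < (k : ℤ) := ihm (by omega)
      have h2 := h (m+1) hm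
      push_neg at h2
      have hstep : psum s (m+1) = psum s m + stepv (s m) := Finset.sum_range_succ _ _
      rw [abs_lt] at h1 ⊢
      rcases h2 with ⟨hne1, hne2⟩
      cases hb : s m <;> rw [hb] at hstep <;> simp [stepv] at hstep <;> omega

section Meas

variable {Ω : Type*} [MeasurableSpace Ω] (P : Measure Ω) [IsProbabilityMeasure P]
  {p : ℝ} (X : ℕ → Ω → ℤ)

def Es (n : ℕ) (t : Fin n → Bool) : Set Ω :=
  ⋂ i ∈ Finset.range n, {ω | X i ω = stepv (ext t i)}

lemma ofReal_prod {ι : Type*} (s : Finset ι) (f : ι → ℝ) (hf : ∀ i ∈ s, 0 ≤ f i) :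
    ENNReal.ofReal (∏ i ∈ s, f i) = ∏ i ∈ s, ENNReal.ofReal (f i) := by
  classical
  induction s using Finset.induction with
  | empty => simp
  | insert a s' hnot ih =>
      rw [Finset.prod_insert hnot, Finset.prod_insert hnot,
        ENNReal.ofReal_mul (hf a (Finset.mem_insert_self a s'))]
      rw [ih fun i hi => hf i (Finset.mem_insert_of_mem hi)]

lemma meas_Es (hX : IsBiasedWalkSteps P X p) (hp0 : 0 ≤ p) (hp1 : p ≤ 1)
    (n : ℕ) (t : Fin n → Bool) :
    P (Es X n t) = ENNReal.ofReal (∏ i ∈ Finset.range n, wgt p (ext t i)) := by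
  have key := hX.2.1.measure_inter_preimage_eq_mul (μ := P) (S := Finset.range n)
    (sets := fun i => {stepv (ext t i)}) (fun i _ => measurableSet_singleton _)
  have hset : ∀ i : ℕ, X i ⁻¹' {stepv (ext t i)} = {ω | X i ω = stepv (ext t i)} := by
    intro i; ext ω; simp
  rw [Es]
  simp only [hset] at key
  rw [key, ofReal_prod _ _ (fun i _ => wgt_nonneg hp0 hp1 _)]
  apply Finset.prod_congr rfl
  intro i _
  have hw : ∀ b : Bool, P {ω | X i ω = stepv b} = ENNReal.ofReal (wgt p b) := by
    intro b
    cases b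
    · exact hX.2.2.2 i
    · exact hX.2.2.1 i
  exact hw (ext t i)

lemma Es_measurable (hX : IsBiasedWalkSteps P X p) (n : ℕ) (t : Fin n → Bool) :
    MeasurableSet (Es X n t) := by
  apply Finset.measurableSet_biInter
  intro i _
  exact hX.1 i (measurableSet_singleton _)

lemma prob_exit (hX : IsBiasedWalkSteps P X p) (hp0 : 0 ≤ p) (hp1 : p ≤ 1)
    {k : ℕ} (hk : 0 < k) (n : ℕ) :
    P {ω | (n : ℕ∞) < exitTime X k ω} =
      ENNReal.ofReal (∑ t : Fin n → Bool,
        (∏ i ∈ Finset.range n, wgt p (ext t i)) *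
          (if ok k 0 n (ext t) then (1:ℝ) else 0)) := by
  classical
  set A : Set Ω := {ω | ∀ m ≤ n, ¬(walk X m ω = (k : ℤ) ∨ walk X m ω = -(k : ℤ))} with hA
  have hAeq : {ω | (n : ℕ∞) < exitTime X k ω} = A :=
    Set.ext fun ω => exitTime_gt_iff X k n ω
  set Gd : Set Ω := ⋂ i ∈ Finset.range n, ({ω | X i ω = 1} ∪ {ω | X i ω = -1}) with hGd
  -- Gd has full measure
  have hGdc : P Gdᶜ = 0 := by
    have hsub : Gdᶜ ⊆ ⋃ i ∈ Finset.range n, ({ω | X i ω = 1} ∪ {ω | X i ω = -1})ᶜ := by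
      rw [hGd, Set.compl_iInter₂]
    refine le_antisymm ?_ zero_le
    refine le_trans (measure_mono hsub) ?_
    refine le_trans (measure_biUnion_finset_le _ _) ?_
    have : ∀ i ∈ Finset.range n, P (({ω | X i ω = 1} ∪ {ω | X i ω = -1})ᶜ) = 0 := by
      intro i _
      have hm1 : MeasurableSet {ω | X i ω = 1} := hX.1 i (measurableSet_singleton 1)
      have hm2 : MeasurableSet {ω | X i ω = -1} := hX.1 i (measurableSet_singleton (-1))
      have hdisj : Disjoint {ω | X i ω = 1} {ω | X i ω = -1} := by
        rw [Set.disjoint_left]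
        intro ω hω1 hω2
        simp only [Set.mem_setOf_eq] at hω1 hω2
        omega
      have hunion : P ({ω | X i ω = 1} ∪ {ω | X i ω = -1}) = 1 := by
        rw [measure_union hdisj hm2, hX.2.2.1 i, hX.2.2.2 i,
          ← ENNReal.ofReal_add hp0 (by linarith)]
        norm_num
      rw [measure_compl (hm1.union hm2) (measure_ne_top _ _), hunion, measure_univ,
        tsub_self]
    rw [Finset.sum_congr rfl this]
    simp
  -- walk equals psum on Es
  have hwalk : ∀ (t : Fin n → Bool) (ω : Ω), ω ∈ Es X n t → ∀ m ≤ n,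
      walk X m ω = psum (ext t) m := by
    intro t ω hω m hm
    rw [Es, Set.mem_iInter₂] at hω
    unfold walk psum
    apply Finset.sum_congr rfl
    intro j hj
    have hjn : j ∈ Finset.range n := by
      rw [Finset.mem_range] at hj ⊢; omega
    exact hω j hjn
  -- partition
  have hpart : A ∩ Gd = ⋃ t ∈ Finset.univ.filter (fun t : Fin n → Bool => ok k 0 n (ext t)),
      Es X n t := by
    ext ω
    constructor
    · rintro ⟨hωA, hωG⟩
      rw [hGd, Set.mem_iInter₂] at hωG
      set t : Fin n → Bool := fun i => decide (X i ω = 1) with ht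
      have hmem : ω ∈ Es X n t := by
        rw [Es, Set.mem_iInter₂]
        intro i hi
        have hG := hωG i hi
        have hext : ext t i = decide (X i ω = 1) := by
          rw [Finset.mem_range] at hi
          simp [ext, hi, ht]
        rw [Set.mem_setOf_eq, hext]
        rcases hG with h1 | h1 <;> rw [Set.mem_setOf_eq] at h1 <;> simp [h1, stepv]
      refine Set.mem_iUnion₂.2 ⟨t, Finset.mem_filter.2 ⟨Finset.mem_univ _, ?_⟩, hmem⟩
      apply psum_ok hk
      intro m hm
      rw [← hwalk t ω hmem m hm]
      exact hωA m hm
    · intro hω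
      rw [Set.mem_iUnion₂] at hω
      obtain ⟨t, htf, hωE⟩ := hω
      rw [Finset.mem_filter] at htf
      have hok := htf.2
      constructor
      · intro m hm
        rw [hwalk t ω hωE m hm]
        have := hok m hm
        rw [zero_add] at this
        rw [abs_lt] at this
        push_neg
        constructor <;> omega
      · rw [hGd, Set.mem_iInter₂]
        intro i hi
        rw [Es, Set.mem_iInter₂] at hωE
        have := hωE i hi
        rw [Set.mem_setOf_eq] at this
        cases hb : ext t i <;> rw [hb] at this <;> simp [stepv] at this <;>
          simp [Set.mem_setOf_eq, this]
  -- P A = P (A ∩ Gd)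
  have hPA : P A = P (A ∩ Gd) := by
    refine le_antisymm ?_ (measure_mono Set.inter_subset_left)
    calc P A = P ((A ∩ Gd) ∪ (A ∩ Gdᶜ)) := by
            rw [← Set.inter_union_distrib_left, Set.union_compl_self, Set.inter_univ]
      _ ≤ P (A ∩ Gd) + P (A ∩ Gdᶜ) := measure_union_le _ _
      _ ≤ P (A ∩ Gd) + P Gdᶜ := by
            gcongr
            exact Set.inter_subset_right
      _ = P (A ∩ Gd) := by rw [hGdc, add_zero]
  -- disjointness
  have hdisj : Set.PairwiseDisjoint
      ↑(Finset.univ.filter (fun t : Fin n → Bool => ok k 0 n (ext t))) (Es X n) := by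
    intro t _ t' _ hne
    rw [Function.onFun, Set.disjoint_left]
    intro ω hω hω'
    obtain ⟨i, hi⟩ := Function.ne_iff.1 hne
    rw [Es, Set.mem_iInter₂] at hω hω'
    have h1 := hω i (Finset.mem_range.2 i.isLt)
    have h2 := hω' i (Finset.mem_range.2 i.isLt)
    rw [Set.mem_setOf_eq] at h1 h2
    have he : ∀ (s : Fin n → Bool), ext s (i : ℕ) = s i := by
      intro s; simp [ext, i.isLt]
    rw [he] at h1 h2
    apply hi
    cases hb : t i <;> cases hb' : t' i <;> rw [hb] at h1 <;> rw [hb'] at h2 <;>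
      simp [stepv] at h1 h2 <;> omega
  have hmeas : ∀ t ∈ Finset.univ.filter (fun t : Fin n → Bool => ok k 0 n (ext t)),
      MeasurableSet (Es X n t) := fun t _ => Es_measurable P X hX n t
  rw [hAeq, hPA, hpart, measure_biUnion_finset hdisj hmeas]
  have hterm : ∀ t ∈ Finset.univ.filter (fun t : Fin n → Bool => ok k 0 n (ext t)),
      P (Es X n t) = ENNReal.ofReal (∏ i ∈ Finset.range n, wgt p (ext t i)) :=
    fun t _ => meas_Es P X hX hp0 hp1 n t
  rw [Finset.sum_congr rfl hterm]
  have hsum : (∑ t : Fin n → Bool,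
      (∏ i ∈ Finset.range n, wgt p (ext t i)) * (if ok k 0 n (ext t) then (1:ℝ) else 0))
      = ∑ t ∈ Finset.univ.filter (fun t : Fin n → Bool => ok k 0 n (ext t)),
          ∏ i ∈ Finset.range n, wgt p (ext t i) := by
    rw [Finset.sum_filter]
    apply Finset.sum_congr rfl
    intro t _
    split <;> simp
  rw [hsum, ENNReal.ofReal_sum_of_nonneg
    (fun t _ => Finset.prod_nonneg fun i _ => wgt_nonneg hp0 hp1 _)]

end Meas

end RWAux

/-- For `1/2 ≤ p₁ < p₂ < 1`, the exit time of the `p₁`-biased random walk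
from `(-k, k)` stochastically dominates that of the `p₂`-biased walk:
`ℙ(σ_{p₁}^k > n) ≥ ℙ(σ_{p₂}^k > n)` for all `n`. -/
theorem rw_exit_time_stochastically_decreasing
    {Ω₁ Ω₂ : Type*} [MeasurableSpace Ω₁] [MeasurableSpace Ω₂]
    (P₁ : Measure Ω₁) (P₂ : Measure Ω₂)
    [IsProbabilityMeasure P₁] [IsProbabilityMeasure P₂]
    {p₁ p₂ : ℝ} (h₁ : 1 / 2 ≤ p₁) (h₁₂ : p₁ < p₂) (h₂ : p₂ < 1)
    (X₁ : ℕ → Ω₁ → ℤ) (X₂ : ℕ → Ω₂ → ℤ)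
    (hX₁ : IsBiasedWalkSteps P₁ X₁ p₁) (hX₂ : IsBiasedWalkSteps P₂ X₂ p₂)
    (k : ℕ) (hk : 0 < k) (n : ℕ) :
    P₂ {ω | (n : ℕ∞) < exitTime X₂ k ω} ≤ P₁ {ω | (n : ℕ∞) < exitTime X₁ k ω} := by
  have hp10 : (0:ℝ) ≤ p₁ := by linarith
  have hp11 : p₁ ≤ 1 := by linarith
  have hp20 : (0:ℝ) ≤ p₂ := by linarith
  have hp21 : p₂ ≤ 1 := by linarith
  rw [RWAux.prob_exit P₂ X₂ hX₂ hp20 hp21 hk n,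
    RWAux.prob_exit P₁ X₁ hX₁ hp10 hp11 hk n,
    RWAux.sum_paths p₂ k n 0, RWAux.sum_paths p₁ k n 0]
  exact ENNReal.ofReal_le_ofReal (RWAux.T_comp h₁ h₁₂.le h₂ hk n)
end

section
/- Independence of exit position and exit time for biased random walk: Let p ∈ (0,1), let S be the biased simple random walk started at 0 with up-step probability p, fix a positive integer k, and let σ = inf{n : S_n = ±k}. Then under the law ℚ_p of the biased walk, the random variables S_σ (the exit position, taking values ±k) and σ (the exit time) are independent. -/
open MeasureTheory ProbabilityTheory
open scoped ENNReal

/-- The natural filtration `ℱ_n = σ(X_1, …, X_n)` of the steps. -/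
def rwFilt {Ω : Type*} (X : ℕ → Ω → ℤ) (n : ℕ) : MeasurableSpace Ω :=
  ⨆ j ∈ Finset.range n, MeasurableSpace.comap (X j) inferInstance

/-- The stopped σ-algebra `ℱ_σ = {A : A ∩ {σ ≤ n} ∈ ℱ_n for all n}` (this family is already
a σ-algebra, so generating from it gives exactly `ℱ_σ`). -/
def stoppedSigmaRW {Ω : Type*} (X : ℕ → Ω → ℤ) (σ : Ω → ℕ∞) : MeasurableSpace Ω :=
  MeasurableSpace.generateFrom
    {A | ∀ n : ℕ, MeasurableSet[rwFilt X n] (A ∩ {ω | σ ω ≤ (n : ℕ∞)})}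

set_option linter.unusedSectionVars false
set_option linter.unusedVariables false
set_option linter.unusedTactic false

namespace RWExitAux

variable {Ω : Type*}

/-- hitting predicate -/
def hits (X : ℕ → Ω → ℤ) (k : ℕ) (ω : Ω) (m : ℕ) : Prop :=
  walk X m ω = (k : ℤ) ∨ walk X m ω = -(k : ℤ)

lemma walk_succ (X : ℕ → Ω → ℤ) (n : ℕ) (ω : Ω) :
    walk X (n + 1) ω = walk X n ω + X n ω := Finset.sum_range_succ _ _

lemma exitTime_eq_top_iff {X : ℕ → Ω → ℤ} {k : ℕ} {ω : Ω} :
    exitTime X k ω = ⊤ ↔ ∀ m, ¬ hits X k ω m := by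
  constructor
  · intro h m hm
    have : exitTime X k ω ≤ (m : ℕ∞) := sInf_le ⟨m, rfl, hm⟩
    rw [h] at this
    exact (WithTop.coe_ne_top (top_le_iff.mp this)).elim
  · intro h
    have : {t : ℕ∞ | ∃ m : ℕ, t = (m : ℕ∞) ∧ (walk X m ω = (k : ℤ) ∨ walk X m ω = -(k : ℤ))} = ∅ := by
      ext t; simp only [Set.mem_setOf_eq, Set.mem_empty_iff_false, iff_false]
      rintro ⟨m, rfl, hm⟩; exact h m hm
    rw [exitTime, this, sInf_empty]

lemma exitTime_eq_coe_of {X : ℕ → Ω → ℤ} {k : ℕ} {ω : Ω} {n : ℕ}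
    (h1 : hits X k ω n) (h2 : ∀ m < n, ¬ hits X k ω m) :
    exitTime X k ω = (n : ℕ∞) := by
  refine le_antisymm (sInf_le ⟨n, rfl, h1⟩) (le_sInf ?_)
  rintro t ⟨m, rfl, hm⟩
  rw [Nat.cast_le]
  by_contra hmn
  exact h2 m (lt_of_not_ge hmn) hm

lemma exitTime_eq_coe_iff {X : ℕ → Ω → ℤ} {k : ℕ} {ω : Ω} {n : ℕ} :
    exitTime X k ω = (n : ℕ∞) ↔ hits X k ω n ∧ ∀ m < n, ¬ hits X k ω m := by
  constructor
  · intro h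
    by_cases hne : ∃ m, hits X k ω m
    · classical
      have hfind := Nat.find_spec hne
      have hmin : ∀ m < Nat.find hne, ¬ hits X k ω m := fun m hm => Nat.find_min hne hm
      have := exitTime_eq_coe_of hfind hmin
      rw [h] at this
      have hn : n = Nat.find hne := by exact_mod_cast this
      subst hn; exact ⟨hfind, hmin⟩
    · push_neg at hne
      rw [exitTime_eq_top_iff.mpr hne] at h
      exact absurd h.symm (WithTop.coe_ne_top)
  · rintro ⟨h1, h2⟩; exact exitTime_eq_coe_of h1 h2

end RWExitAux

namespace RWExitAux

variable {Ω : Type*}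

def stepOf (b : Bool) : ℤ := if b then 1 else -1

lemma stepOf_inj : Function.Injective stepOf := by
  intro a b h; cases a <;> cases b <;> simp [stepOf] at h ⊢

lemma stepOf_not (b : Bool) : stepOf (!b) = -stepOf b := by cases b <;> simp [stepOf]

noncomputable def wgt (p : ℝ) (b : Bool) : ℝ≥0∞ :=
  if b then ENNReal.ofReal p else ENNReal.ofReal (1 - p)

/-- extension of a finite sign vector to ℕ, as values in ℤ -/
def extSgn (n : ℕ) (ε : Fin n → Bool) (j : ℕ) : ℤ :=
  if h : j < n then stepOf (ε ⟨j, h⟩) else 1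

def psum (n : ℕ) (ε : Fin n → Bool) (m : ℕ) : ℤ :=
  ∑ j ∈ Finset.range m, extSgn n ε j

def cyl [MeasurableSpace Ω] (X : ℕ → Ω → ℤ) (n : ℕ) (ε : Fin n → Bool) : Set Ω :=
  {ω | ∀ j < n, X j ω = extSgn n ε j}

lemma walk_eq_psum [MeasurableSpace Ω] {X : ℕ → Ω → ℤ} {n : ℕ} {ε : Fin n → Bool} {ω : Ω}
    (hω : ω ∈ cyl X n ε) {m : ℕ} (hm : m ≤ n) : walk X m ω = psum n ε m := by
  refine Finset.sum_congr rfl fun j hj => ?_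
  exact hω j (lt_of_lt_of_le (Finset.mem_range.mp hj) hm)

lemma cyl_disjoint [MeasurableSpace Ω] (X : ℕ → Ω → ℤ) (n : ℕ) {ε ε' : Fin n → Bool}
    (h : ε ≠ ε') : Disjoint (cyl X n ε) (cyl X n ε') := by
  rw [Set.disjoint_left]
  intro ω hω hω'
  apply h
  funext j
  have h1 := hω j j.isLt
  have h2 := hω' j j.isLt
  rw [h1] at h2
  simp only [extSgn, dif_pos j.isLt] at h2
  exact stepOf_inj (by simpa using h2)

lemma cyl_measurable [MeasurableSpace Ω] {X : ℕ → Ω → ℤ} (hm : ∀ i, Measurable (X i))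
    (n : ℕ) (ε : Fin n → Bool) : MeasurableSet (cyl X n ε) := by
  have : cyl X n ε = ⋂ j ∈ Finset.range n, X j ⁻¹' {extSgn n ε j} := by
    ext ω; simp [cyl, Set.mem_iInter]
  rw [this]
  exact Finset.measurableSet_biInter _ fun j _ => (hm j) (measurableSet_singleton _)

variable [MeasurableSpace Ω] {P : Measure Ω}
variable {X : ℕ → Ω → ℤ} {p : ℝ}

lemma marginal_one (hX : IsBiasedWalkSteps P X p) (i : ℕ) :
    P (X i ⁻¹' {(1 : ℤ)}) = ENNReal.ofReal p := by
  have : X i ⁻¹' {(1:ℤ)} = {ω | X i ω = 1} := by ext ω; simp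
  rw [this]; exact hX.2.2.1 i

lemma marginal_negone (hX : IsBiasedWalkSteps P X p) (i : ℕ) :
    P (X i ⁻¹' {(-1 : ℤ)}) = ENNReal.ofReal (1 - p) := by
  have : X i ⁻¹' {(-1:ℤ)} = {ω | X i ω = -1} := by ext ω; simp
  rw [this]; exact hX.2.2.2 i

lemma cyl_prob (hX : IsBiasedWalkSteps P X p) (n : ℕ) (ε : Fin n → Bool) :
    P (cyl X n ε) = ∏ j : Fin n, wgt p (ε j) := by
  have hcyl : cyl X n ε = ⋂ j ∈ Finset.range n, X j ⁻¹' {extSgn n ε j} := by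
    ext ω; simp [cyl, Set.mem_iInter]
  have := hX.2.1.measure_inter_preimage_eq_mul (Finset.range n)
    (sets := fun i => {extSgn n ε i}) (fun i _ => measurableSet_singleton _)
  rw [hcyl, this]
  rw [← Fin.prod_univ_eq_prod_range (fun j => P (X j ⁻¹' {extSgn n ε j})) n]
  refine Finset.prod_congr rfl fun j _ => ?_
  have hj : extSgn n ε (j : ℕ) = stepOf (ε j) := by
    simp [extSgn, dif_pos j.isLt]
  rw [hj]
  cases hb : ε j
  · have : stepOf false = (-1 : ℤ) := rfl
    rw [this, marginal_negone hX]; simp [wgt]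
  · have : stepOf true = (1 : ℤ) := rfl
    rw [this, marginal_one hX]; simp [wgt]

end RWExitAux
namespace RWExitAux

variable {Ω : Type*} [MeasurableSpace Ω] {P : Measure Ω} {X : ℕ → Ω → ℤ} {p : ℝ}

def Good (X : ℕ → Ω → ℤ) : Set Ω := {ω | ∀ i, X i ω = 1 ∨ X i ω = -1}

lemma good_compl_null [IsProbabilityMeasure P] (hp : 0 < p) (hp1 : p < 1)
    (hX : IsBiasedWalkSteps P X p) :
    P (Good X)ᶜ = 0 := by
  have hsub : (Good X)ᶜ ⊆ ⋃ i, ({ω | X i ω = 1} ∪ {ω | X i ω = -1})ᶜ := by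
    intro ω hω
    simp only [Good, Set.mem_compl_iff, Set.mem_setOf_eq, not_forall] at hω
    obtain ⟨i, hi⟩ := hω
    push_neg at hi
    exact Set.mem_iUnion.mpr ⟨i, by simp [hi.1, hi.2]⟩
  refine measure_mono_null hsub (measure_iUnion_null fun i => ?_)
  have hmeas : MeasurableSet ({ω | X i ω = 1} ∪ {ω | X i ω = -1}) := by
    have h1 : {ω | X i ω = 1} = X i ⁻¹' {1} := by ext ω; simp
    have h2 : {ω | X i ω = -1} = X i ⁻¹' {-1} := by ext ω; simp
    rw [h1, h2]
    exact ((hX.1 i) (measurableSet_singleton _)).union ((hX.1 i) (measurableSet_singleton _))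
  have hdisj : Disjoint {ω | X i ω = 1} {ω | X i ω = -1} := by
    rw [Set.disjoint_left]; intro ω h1 h2
    simp only [Set.mem_setOf_eq] at h1 h2; omega
  have hm2 : MeasurableSet {ω | X i ω = -1} := by
    have h2 : {ω | X i ω = -1} = X i ⁻¹' {-1} := by ext ω; simp
    rw [h2]; exact (hX.1 i) (measurableSet_singleton _)
  have hun : P ({ω | X i ω = 1} ∪ {ω | X i ω = -1}) = 1 := by
    rw [measure_union hdisj hm2, hX.2.2.1 i, hX.2.2.2 i,
      ← ENNReal.ofReal_add hp.le (by linarith)]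
    norm_num
  rw [measure_compl hmeas (measure_ne_top _ _), hun, measure_univ, tsub_self]

end RWExitAux
namespace RWExitAux

variable {Ω : Type*} [MeasurableSpace Ω] {P : Measure Ω} {X : ℕ → Ω → ℤ} {p : ℝ}

/-- measures agree modulo a null set -/
lemma measure_eq_of_null (A B N : Set Ω) (hN : P N = 0) (h1 : A ⊆ B ∪ N) (h2 : B ⊆ A ∪ N) :
    P A = P B := by
  refine le_antisymm ?_ ?_
  · calc P A ≤ P (B ∪ N) := measure_mono h1
      _ ≤ P B + P N := measure_union_le _ _
      _ = P B := by rw [hN, add_zero]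
  · calc P B ≤ P (A ∪ N) := measure_mono h2
      _ ≤ P A + P N := measure_union_le _ _
      _ = P A := by rw [hN, add_zero]

lemma walk_measurable (hm : ∀ i, Measurable (X i)) (n : ℕ) : Measurable (walk X n) :=
  Finset.measurable_sum _ fun i _ => hm i

/-- the event σ = n, S_n = v -/
def EV (X : ℕ → Ω → ℤ) (k n : ℕ) (v : ℤ) : Set Ω :=
  {ω | exitTime X k ω = (n : ℕ∞) ∧ walk X n ω = v}

lemma exitTime_coe_measurable (hm : ∀ i, Measurable (X i)) (k n : ℕ) :
    MeasurableSet {ω | exitTime X k ω = (n : ℕ∞)} := by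
  have : {ω | exitTime X k ω = (n : ℕ∞)} =
      ({ω | walk X n ω = (k:ℤ)} ∪ {ω | walk X n ω = -(k:ℤ)}) ∩
      ⋂ m ∈ Finset.range n, ({ω | walk X m ω = (k:ℤ)} ∪ {ω | walk X m ω = -(k:ℤ)})ᶜ := by
    ext ω
    simp only [Set.mem_setOf_eq, Set.mem_inter_iff, Set.mem_union, Set.mem_iInter,
      Set.mem_compl_iff, Finset.mem_range, exitTime_eq_coe_iff]
    unfold hits
    tauto
  rw [this]
  have hw : ∀ m : ℕ, MeasurableSet ({ω | walk X m ω = (k:ℤ)} ∪ {ω | walk X m ω = -(k:ℤ)}) := by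
    intro m
    exact ((walk_measurable hm m) (measurableSet_singleton ((k:ℤ)))).union
      ((walk_measurable hm m) (measurableSet_singleton (-(k:ℤ))))
  exact (hw n).inter (Finset.measurableSet_biInter _ fun m _ => (hw m).compl)

lemma EV_measurable (hm : ∀ i, Measurable (X i)) (k n : ℕ) (v : ℤ) :
    MeasurableSet (EV X k n v) := by
  have : EV X k n v = {ω | exitTime X k ω = (n : ℕ∞)} ∩ walk X n ⁻¹' {v} := by
    ext ω; simp [EV]
  rw [this]
  exact (exitTime_coe_measurable hm k n).inter ((walk_measurable hm n) (measurableSet_singleton v))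

open Classical in
/-- admissible sign vectors: first hit of ±k at time n with value v -/
noncomputable def AD (k n : ℕ) (v : ℤ) : Finset (Fin n → Bool) :=
  Finset.univ.filter (fun ε => psum n ε n = v ∧
    ∀ m < n, psum n ε m ≠ (k:ℤ) ∧ psum n ε m ≠ -(k:ℤ))

lemma EV_decomp (k n : ℕ) (v : ℤ) (hv : v = (k:ℤ) ∨ v = -(k:ℤ)) :
    EV X k n v ∩ Good X = (⋃ ε ∈ AD k n v, cyl X n ε) ∩ Good X := by
  ext ω
  simp only [Set.mem_inter_iff, Set.mem_iUnion, and_congr_left_iff]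
  intro hg
  constructor
  · rintro ⟨hσ, hwv⟩
    rw [exitTime_eq_coe_iff] at hσ
    refine ⟨fun j => decide (X (j : ℕ) ω = 1), ?_, ?_⟩
    · have hcyl : ω ∈ cyl X n (fun j => decide (X (j : ℕ) ω = 1)) := by
        intro j hj
        rcases hg j with h1 | h1 <;>
          simp [extSgn, dif_pos hj, h1, stepOf]
      rw [AD, Finset.mem_filter]
      refine ⟨Finset.mem_univ _, ?_, fun m hm => ?_⟩
      · rw [← walk_eq_psum hcyl le_rfl, hwv]
      · have := hσ.2 m hm
        unfold hits at this
        push_neg at this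
        rw [← walk_eq_psum hcyl hm.le]
        exact this
    · intro j hj
      rcases hg j with h1 | h1 <;>
        simp [extSgn, dif_pos hj, h1, stepOf]
  · rintro ⟨ε, hε, hcyl⟩
    rw [AD, Finset.mem_filter] at hε
    obtain ⟨-, hsum, hno⟩ := hε
    have hwn : walk X n ω = v := by rw [walk_eq_psum hcyl le_rfl, hsum]
    refine ⟨exitTime_eq_coe_of ?_ ?_, hwn⟩
    · unfold hits; rw [hwn]; exact hv
    · intro m hm
      unfold hits
      rw [walk_eq_psum hcyl hm.le]
      push_neg
      exact hno m hm

lemma EV_prob [IsProbabilityMeasure P] (hp : 0 < p) (hp1 : p < 1)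
    (hX : IsBiasedWalkSteps P X p) (k n : ℕ) (v : ℤ) (hv : v = (k:ℤ) ∨ v = -(k:ℤ)) :
    P (EV X k n v) = ∑ ε ∈ AD k n v, ∏ j : Fin n, wgt p (ε j) := by
  have hnull := good_compl_null hp hp1 hX
  have h1 : P (EV X k n v) = P (⋃ ε ∈ AD k n v, cyl X n ε) := by
    refine measure_eq_of_null _ _ _ hnull ?_ ?_
    · intro ω hω
      by_cases hg : ω ∈ Good X
      · have : ω ∈ (⋃ ε ∈ AD k n v, cyl X n ε) ∩ Good X := by
          rw [← EV_decomp k n v hv]; exact ⟨hω, hg⟩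
        exact Or.inl this.1
      · exact Or.inr hg
    · intro ω hω
      by_cases hg : ω ∈ Good X
      · have : ω ∈ EV X k n v ∩ Good X := by
          rw [EV_decomp k n v hv]; exact ⟨hω, hg⟩
        exact Or.inl this.1
      · exact Or.inr hg
  rw [h1, measure_biUnion_finset ?_ (fun ε _ => cyl_measurable hX.1 n ε)]
  · exact Finset.sum_congr rfl fun ε _ => cyl_prob hX n ε
  · intro ε _ ε' _ hne
    exact cyl_disjoint X n hne

end RWExitAux
namespace RWExitAux

variable {Ω : Type*} [MeasurableSpace Ω] {P : Measure Ω} {X : ℕ → Ω → ℤ} {p : ℝ}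

lemma psum_not (n : ℕ) (ε : Fin n → Bool) (m : ℕ) (hm : m ≤ n) :
    psum n (fun j => !(ε j)) m = -psum n ε m := by
  rw [psum, psum, ← Finset.sum_neg_distrib]
  refine Finset.sum_congr rfl fun j hj => ?_
  have hj' : j < n := lt_of_lt_of_le (Finset.mem_range.mp hj) hm
  simp only [extSgn, dif_pos hj']
  exact stepOf_not _

lemma AD_neg (k n : ℕ) :
    AD k n (-(k:ℤ)) = (AD k n (k:ℤ)).image (fun ε => fun j => !(ε j)) := by
  ext ε
  classical
  simp only [Finset.mem_image]
  constructor
  · intro hε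
    rw [AD, Finset.mem_filter] at hε
    refine ⟨fun j => !(ε j), ?_, by funext j; simp⟩
    rw [AD, Finset.mem_filter]
    refine ⟨Finset.mem_univ _, ?_, fun m hm => ?_⟩
    · rw [psum_not n ε n le_rfl, hε.2.1]; ring
    · have := hε.2.2 m hm
      rw [psum_not n ε m hm.le]
      constructor
      · intro h; exact this.2 (by linarith)
      · intro h; exact this.1 (by linarith)
  · rintro ⟨ε', hε', rfl⟩
    rw [AD, Finset.mem_filter] at hε' ⊢
    refine ⟨Finset.mem_univ _, ?_, fun m hm => ?_⟩
    · rw [psum_not n ε' n le_rfl, hε'.2.1]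
    · have := hε'.2.2 m hm
      rw [psum_not n ε' m hm.le]
      constructor
      · intro h; exact this.2 (by linarith)
      · intro h; exact this.1 (by linarith)

lemma wgt_identity {n k : ℕ} {ε : Fin n → Bool} (hsum : psum n ε n = (k:ℤ)) :
    (∏ j : Fin n, wgt p (ε j)) * (ENNReal.ofReal (1-p))^k
      = (∏ j : Fin n, wgt p (!(ε j))) * (ENNReal.ofReal p)^k := by
  classical
  set c := ENNReal.ofReal p with hc
  set d := ENNReal.ofReal (1-p) with hd
  let T : Finset (Fin n) := Finset.univ.filter (fun j => ε j = true)
  let F : Finset (Fin n) := Finset.univ.filter (fun j => ¬ (ε j = true))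
  have hTc : ∀ j ∈ T, wgt p (ε j) = c := by
    intro j hj; rw [Finset.mem_filter] at hj; simp [wgt, hj.2, hc]
  have hFd : ∀ j ∈ F, wgt p (ε j) = d := by
    intro j hj; rw [Finset.mem_filter] at hj
    simp only [Bool.not_eq_true] at hj; simp [wgt, hj.2, hd]
  have hTd : ∀ j ∈ T, wgt p (!(ε j)) = d := by
    intro j hj; rw [Finset.mem_filter] at hj; simp [wgt, hj.2, hd]
  have hFc : ∀ j ∈ F, wgt p (!(ε j)) = c := by
    intro j hj; rw [Finset.mem_filter] at hj
    simp only [Bool.not_eq_true] at hj; simp [wgt, hj.2, hc]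
  have hprod1 : (∏ j : Fin n, wgt p (ε j)) = c ^ T.card * d ^ F.card := by
    rw [← Finset.prod_filter_mul_prod_filter_not Finset.univ (fun j => ε j = true)
      (fun j => wgt p (ε j)), Finset.prod_congr rfl hTc, Finset.prod_congr rfl hFd,
      Finset.prod_const, Finset.prod_const]
  have hprod2 : (∏ j : Fin n, wgt p (!(ε j))) = d ^ T.card * c ^ F.card := by
    rw [← Finset.prod_filter_mul_prod_filter_not Finset.univ (fun j => ε j = true)
      (fun j => wgt p (!(ε j))), Finset.prod_congr rfl hTd, Finset.prod_congr rfl hFc,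
      Finset.prod_const, Finset.prod_const]
  have hT1 : ∀ j ∈ T, stepOf (ε j) = 1 := by
    intro j hj; rw [Finset.mem_filter] at hj; simp [stepOf, hj.2]
  have hF1 : ∀ j ∈ F, stepOf (ε j) = -1 := by
    intro j hj; rw [Finset.mem_filter] at hj
    simp only [Bool.not_eq_true] at hj; simp [stepOf, hj.2]
  have hsum' : (T.card : ℤ) - (F.card : ℤ) = (k : ℤ) := by
    have hps : psum n ε n = (T.card : ℤ) - (F.card : ℤ) := by
      rw [psum]
      have h0 : ∑ j ∈ Finset.range n, extSgn n ε j = ∑ j : Fin n, stepOf (ε j) := by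
        rw [← Fin.sum_univ_eq_sum_range (fun j => extSgn n ε j) n]
        exact Finset.sum_congr rfl fun j _ => by simp [extSgn, dif_pos j.isLt]
      rw [h0, ← Finset.sum_filter_add_sum_filter_not Finset.univ (fun j => ε j = true)
        (fun j => stepOf (ε j)), Finset.sum_congr rfl hT1, Finset.sum_congr rfl hF1,
        Finset.sum_const, Finset.sum_const]
      push_cast; ring
    rw [hps] at hsum; omega
  have htk : T.card = F.card + k := by omega
  rw [hprod1, hprod2, htk, pow_add]
  ring
end RWExitAux
namespace RWExitAux

variable {Ω : Type*} [MeasurableSpace Ω] {P : Measure Ω} {X : ℕ → Ω → ℤ} {p : ℝ}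

lemma alpha_beta [IsProbabilityMeasure P] (hp : 0 < p) (hp1 : p < 1)
    (hX : IsBiasedWalkSteps P X p) (k n : ℕ) :
    P (EV X k n (k:ℤ)) * (ENNReal.ofReal (1-p))^k
      = P (EV X k n (-(k:ℤ))) * (ENNReal.ofReal p)^k := by
  rw [EV_prob hp hp1 hX k n (k:ℤ) (Or.inl rfl),
    EV_prob hp hp1 hX k n (-(k:ℤ)) (Or.inr rfl), AD_neg]
  rw [Finset.sum_image ?_]
  · rw [Finset.sum_mul, Finset.sum_mul]
    refine Finset.sum_congr rfl fun ε hε => ?_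
    have hsum : psum n ε n = (k:ℤ) := by
      classical
      rw [AD, Finset.mem_filter] at hε
      exact hε.2.1
    exact wgt_identity hsum
  · intro ε _ ε' _ h
    funext j
    have := congrFun h j
    simpa using this

end RWExitAux
namespace RWExitAux

variable {Ω : Type*} [MeasurableSpace Ω] {P : Measure Ω} {X : ℕ → Ω → ℤ} {p : ℝ}

lemma walk_bounded {k : ℕ} (hk : 0 < k) {ω : Ω} (hg : ω ∈ Good X)
    (hno : ∀ m, ¬ hits X k ω m) : ∀ j, -(k:ℤ) < walk X j ω ∧ walk X j ω < k := by
  intro j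
  induction j with
  | zero =>
    have : walk X 0 ω = 0 := Finset.sum_range_zero _
    rw [this]
    constructor <;> [linarith [Int.natCast_pos.mpr hk]; exact_mod_cast hk]
  | succ j ih =>
    have hstep := walk_succ X j ω
    have hx := hg j
    have hne := hno (j+1)
    unfold hits at hne
    push_neg at hne
    rcases hx with h1 | h1 <;> rw [h1] at hstep <;> omega

/-- the m-th block of 2k consecutive up-steps -/
def Blk (X : ℕ → Ω → ℤ) (k m : ℕ) : Set Ω :=
  ⋂ j ∈ Finset.Ico (2*k*m) (2*k*m + 2*k), X j ⁻¹' {(1:ℤ)}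

lemma top_subset_blk_compl {k : ℕ} (hk : 0 < k) (m : ℕ) :
    Good X ∩ {ω | exitTime X k ω = ⊤} ⊆ (Blk X k m)ᶜ := by
  rintro ω ⟨hg, hσ⟩ hB
  simp only [Set.mem_setOf_eq] at hσ
  have hno := exitTime_eq_top_iff.mp hσ
  have hbd := walk_bounded hk hg hno
  simp only [Blk, Set.mem_iInter, Finset.mem_Ico, Set.mem_preimage,
    Set.mem_singleton_iff] at hB
  set w := walk X (2*k*m) ω with hw
  have hwalk : ∀ i, i ≤ 2*k → walk X (2*k*m + i) ω = w + i := by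
    intro i hi
    induction i with
    | zero => simp [hw]
    | succ i ih =>
      have h1 : walk X (2*k*m + (i+1)) ω = walk X (2*k*m + i) ω + X (2*k*m + i) ω := by
        rw [← walk_succ]; ring_nf
      rw [h1, ih (by omega), hB (2*k*m + i) ⟨by omega, by omega⟩]
      push_cast; ring
  obtain ⟨hw1, hw2⟩ := hbd (2*k*m)
  rw [← hw] at hw1 hw2
  set i := (↑k - w).toNat with hi
  have hi' : (i : ℤ) = ↑k - w := Int.toNat_of_nonneg (by omega)
  have hik : i ≤ 2*k := by omega
  have := hwalk i hik
  rw [hi'] at this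
  exact hno (2*k*m + i) (Or.inl (by omega))

lemma blk_prob [IsProbabilityMeasure P] (hX : IsBiasedWalkSteps P X p) (k m : ℕ) :
    P (Blk X k m) = (ENNReal.ofReal p) ^ (2*k) := by
  rw [Blk, hX.2.1.measure_inter_preimage_eq_mul (Finset.Ico (2*k*m) (2*k*m+2*k))
    (sets := fun _ => {(1:ℤ)}) (fun i _ => measurableSet_singleton _)]
  rw [Finset.prod_congr rfl (fun i _ => marginal_one hX i), Finset.prod_const,
    Nat.card_Ico]
  congr 1
  omega

lemma blk_measurable (hm : ∀ i, Measurable (X i)) (k m : ℕ) :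
    MeasurableSet (Blk X k m) :=
  Finset.measurableSet_biInter _ fun j _ => (hm j) (measurableSet_singleton _)

lemma blk_compl_inter_prob [IsProbabilityMeasure P] (hX : IsBiasedWalkSteps P X p) (k : ℕ)
    (hk : 0 < k) : ∀ M : ℕ,
    P (⋂ m ∈ Finset.range M, (Blk X k m)ᶜ) = (1 - (ENNReal.ofReal p)^(2*k)) ^ M := by
  intro M
  induction M with
  | zero => simp
  | succ M ih =>
    have hrange : (⋂ m ∈ Finset.range (M+1), (Blk X k m)ᶜ)
        = (⋂ m ∈ Finset.range M, (Blk X k m)ᶜ) ∩ (Blk X k M)ᶜ := by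
      rw [Finset.range_add_one]
      rw [Finset.set_biInter_insert]
      exact Set.inter_comm _ _
    rw [hrange]
    -- independence of the two σ-algebras
    have hiI : ProbabilityTheory.iIndep (fun i => MeasurableSpace.comap (X i) inferInstance) P :=
      (iIndepFun_iff_iIndep _ _ _).mp hX.2.1
    have hle : ∀ i, MeasurableSpace.comap (X i) inferInstance ≤ (by infer_instance : MeasurableSpace Ω) :=
      fun i => (hX.1 i).comap_le
    have hdisjST : Disjoint {i : ℕ | i < 2*k*M} {i : ℕ | 2*k*M ≤ i} := by
      rw [Set.disjoint_left]; intro i h1 h2; simp only [Set.mem_setOf_eq] at h1 h2; omega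
    have hind := indep_iSup_of_disjoint hle hiI hdisjST
    rw [Indep_iff] at hind
    have hXmem : ∀ (S : Set ℕ) (j : ℕ), j ∈ S →
        MeasurableSet[⨆ i ∈ S, MeasurableSpace.comap (X i) inferInstance] (X j ⁻¹' {(1:ℤ)}) := by
      intro S j hj
      have h1 : MeasurableSet[MeasurableSpace.comap (X j) inferInstance] (X j ⁻¹' {(1:ℤ)}) :=
        ⟨{(1:ℤ)}, measurableSet_singleton _, rfl⟩
      exact (le_iSup₂ (f := fun i (_ : i ∈ S) => MeasurableSpace.comap (X i)
        (inferInstance : MeasurableSpace ℤ)) j hj) _ h1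
    have hBmem : ∀ (S : Set ℕ) (m : ℕ), (∀ j ∈ Finset.Ico (2*k*m) (2*k*m + 2*k), j ∈ S) →
        MeasurableSet[⨆ i ∈ S, MeasurableSpace.comap (X i) inferInstance] (Blk X k m) := by
      intro S m hsub
      exact Finset.measurableSet_biInter _ fun j hj => hXmem S j (hsub j hj)
    have hA : MeasurableSet[⨆ i ∈ {i : ℕ | i < 2*k*M}, MeasurableSpace.comap (X i) inferInstance]
        (⋂ m ∈ Finset.range M, (Blk X k m)ᶜ) := by
      refine Finset.measurableSet_biInter _ fun m hm => MeasurableSet.compl ?_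
      refine hBmem _ m fun j hj => ?_
      rw [Finset.mem_Ico] at hj
      rw [Finset.mem_range] at hm
      simp only [Set.mem_setOf_eq]
      have : 2*k*m + 2*k ≤ 2*k*M := by nlinarith
      omega
    have hB : MeasurableSet[⨆ i ∈ {i : ℕ | 2*k*M ≤ i}, MeasurableSpace.comap (X i) inferInstance]
        ((Blk X k M)ᶜ) := by
      refine MeasurableSet.compl ?_
      refine hBmem _ M fun j hj => ?_
      rw [Finset.mem_Ico] at hj
      simp only [Set.mem_setOf_eq]
      omega
    rw [hind _ _ hA hB, ih]
    have hc : P ((Blk X k M)ᶜ) = 1 - (ENNReal.ofReal p)^(2*k) := by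
      rw [measure_compl (blk_measurable hX.1 k M) (measure_ne_top _ _), measure_univ,
        blk_prob hX k M]
    rw [hc, pow_succ]

lemma exit_top_null [IsProbabilityMeasure P] (hp : 0 < p) (hp1 : p < 1)
    (hX : IsBiasedWalkSteps P X p) (k : ℕ) (hk : 0 < k) :
    P {ω | exitTime X k ω = ⊤} = 0 := by
  set c2 := (ENNReal.ofReal p)^(2*k) with hc2
  have hc2pos : c2 ≠ 0 := by
    rw [hc2]
    exact pow_ne_zero _ (by simp [ENNReal.ofReal_eq_zero, not_le, hp])
  have hlt1 : (1 : ℝ≥0∞) - c2 < 1 :=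
    ENNReal.sub_lt_self ENNReal.one_ne_top one_ne_zero hc2pos
  have hbound : ∀ M : ℕ, P {ω | exitTime X k ω = ⊤} ≤ (1 - c2) ^ M := by
    intro M
    have h1 : P {ω | exitTime X k ω = ⊤} = P (Good X ∩ {ω | exitTime X k ω = ⊤}) := by
      refine measure_eq_of_null _ _ ((Good X)ᶜ) (good_compl_null hp hp1 hX) ?_ ?_
      · intro ω hω
        by_cases hg : ω ∈ Good X
        · exact Or.inl ⟨hg, hω⟩
        · exact Or.inr hg
      · exact fun ω hω => Or.inl hω.2
    rw [h1, ← blk_compl_inter_prob hX k hk M]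
    refine measure_mono ?_
    intro ω hω
    rw [Set.mem_iInter₂]
    intro m _
    exact top_subset_blk_compl hk m hω
  have htends : Filter.Tendsto (fun M : ℕ => (1 - c2) ^ M) Filter.atTop (nhds 0) :=
    ENNReal.tendsto_pow_atTop_nhds_zero_of_lt_one hlt1
  have := ge_of_tendsto htends (Filter.Eventually.of_forall hbound)
  exact le_antisymm this zero_le

end RWExitAux
namespace RWExitAux

variable {Ω : Type*} [MeasurableSpace Ω] {P : Measure Ω} {X : ℕ → Ω → ℤ} {p : ℝ}

lemma f_eq_walk {k n : ℕ} {ω : Ω} (h : exitTime X k ω = (n : ℕ∞)) :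
    walk X (exitTime X k ω).toNat ω = walk X n ω := by
  rw [h]; simp

lemma EV_union {k : ℕ} (n : ℕ) :
    {ω : Ω | exitTime X k ω = (n : ℕ∞)} = EV X k n (k:ℤ) ∪ EV X k n (-(k:ℤ)) := by
  ext ω
  simp only [Set.mem_setOf_eq, Set.mem_union, EV]
  constructor
  · intro h
    have := (exitTime_eq_coe_iff.mp h).1
    rcases this with h1 | h1
    · exact Or.inl ⟨h, h1⟩
    · exact Or.inr ⟨h, h1⟩
  · rintro (⟨h, -⟩ | ⟨h, -⟩) <;> exact h

lemma EV_disj {k : ℕ} (hk : 0 < k) (n : ℕ) :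
    Disjoint (EV X k n (k:ℤ)) (EV X k n (-(k:ℤ))) := by
  rw [Set.disjoint_left]
  rintro ω ⟨-, h1⟩ ⟨-, h2⟩
  rw [h1] at h2
  omega

open Classical in
lemma D_eq {k : ℕ} (hk : 0 < k) (E : Set ℤ) (n : ℕ) :
    (fun ω => walk X (exitTime X k ω).toNat ω) ⁻¹' E ∩ {ω | exitTime X k ω = (n : ℕ∞)}
      = (if (k:ℤ) ∈ E then EV X k n (k:ℤ) else ∅)
        ∪ (if -(k:ℤ) ∈ E then EV X k n (-(k:ℤ)) else ∅) := by
  classical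
  ext ω
  simp only [Set.mem_inter_iff, Set.mem_preimage, Set.mem_setOf_eq, Set.mem_union]
  constructor
  · rintro ⟨hfE, hσ⟩
    rw [f_eq_walk hσ] at hfE
    rcases (exitTime_eq_coe_iff.mp hσ).1 with h1 | h1
    · left; rw [if_pos (h1 ▸ hfE)]; exact ⟨hσ, h1⟩
    · right; rw [if_pos (h1 ▸ hfE)]; exact ⟨hσ, h1⟩
  · intro h
    rcases h with h | h
    · by_cases hkE : (k:ℤ) ∈ E
      · rw [if_pos hkE] at h
        obtain ⟨hσ, hw⟩ := h
        exact ⟨by rw [f_eq_walk hσ, hw]; exact hkE, hσ⟩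
      · rw [if_neg hkE] at h; exact absurd h (Set.notMem_empty _)
    · by_cases hkE : -(k:ℤ) ∈ E
      · rw [if_pos hkE] at h
        obtain ⟨hσ, hw⟩ := h
        exact ⟨by rw [f_eq_walk hσ, hw]; exact hkE, hσ⟩
      · rw [if_neg hkE] at h; exact absurd h (Set.notMem_empty _)

open Classical in
lemma D_prob [IsProbabilityMeasure P] (hX : IsBiasedWalkSteps P X p) {k : ℕ} (hk : 0 < k)
    (E : Set ℤ) (n : ℕ) :
    P ((fun ω => walk X (exitTime X k ω).toNat ω) ⁻¹' E ∩ {ω | exitTime X k ω = (n : ℕ∞)})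
      = (if (k:ℤ) ∈ E then (1:ℝ≥0∞) else 0) * P (EV X k n (k:ℤ))
        + (if -(k:ℤ) ∈ E then (1:ℝ≥0∞) else 0) * P (EV X k n (-(k:ℤ))) := by
  classical
  rw [D_eq hk E n]
  have hdisj : Disjoint (if (k:ℤ) ∈ E then EV X k n (k:ℤ) else ∅)
      (if -(k:ℤ) ∈ E then EV X k n (-(k:ℤ)) else ∅) := by
    split_ifs <;> simp [EV_disj hk n]
  have hm2 : MeasurableSet (if -(k:ℤ) ∈ E then EV X k n (-(k:ℤ)) else ∅) := by
    split_ifs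
    · exact EV_measurable hX.1 k n _
    · exact MeasurableSet.empty
  rw [measure_union hdisj hm2]
  congr 1 <;> split_ifs <;> simp

/-- the set `{σ = n}` rewritten with walk for measurability of intersections -/
lemma D_measurable (hm : ∀ i, Measurable (X i)) {k : ℕ} (E : Set ℤ) (hE : MeasurableSet E)
    (n : ℕ) :
    MeasurableSet ((fun ω => walk X (exitTime X k ω).toNat ω) ⁻¹' E
      ∩ {ω | exitTime X k ω = (n : ℕ∞)}) := by
  have heq : (fun ω => walk X (exitTime X k ω).toNat ω) ⁻¹' E
      ∩ {ω | exitTime X k ω = (n : ℕ∞)}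
      = walk X n ⁻¹' E ∩ {ω | exitTime X k ω = (n : ℕ∞)} := by
    ext ω
    simp only [Set.mem_inter_iff, Set.mem_preimage, Set.mem_setOf_eq, and_congr_left_iff]
    intro hσ
    rw [f_eq_walk hσ]
  rw [heq]
  exact ((walk_measurable hm n) hE).inter (exitTime_coe_measurable hm k n)

open Classical in
lemma tsum_decomp [IsProbabilityMeasure P] (hp : 0 < p) (hp1 : p < 1)
    (hX : IsBiasedWalkSteps P X p) {k : ℕ} (hk : 0 < k)
    (E : Set ℤ) (hE : MeasurableSet E) (T : Set ℕ∞) :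
    P ((fun ω => walk X (exitTime X k ω).toNat ω) ⁻¹' E ∩ exitTime X k ⁻¹' T)
      = ∑' n : ℕ, if (n : ℕ∞) ∈ T then
          P ((fun ω => walk X (exitTime X k ω).toNat ω) ⁻¹' E
            ∩ {ω | exitTime X k ω = (n : ℕ∞)}) else 0 := by
  classical
  set f := fun ω => walk X (exitTime X k ω).toNat ω with hf
  set G : ℕ → Set Ω := fun n =>
    if (n : ℕ∞) ∈ T then f ⁻¹' E ∩ {ω | exitTime X k ω = (n : ℕ∞)} else ∅ with hG
  have hGmeas : ∀ n, MeasurableSet (G n) := by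
    intro n
    simp only [hG]
    split_ifs
    · exact D_measurable hX.1 E hE n
    · exact MeasurableSet.empty
  have hGdisj : Pairwise (Function.onFun Disjoint G) := by
    intro m n hmn
    have h1 : G m ⊆ {ω | exitTime X k ω = (m : ℕ∞)} := by
      simp only [hG]; split_ifs
      · exact Set.inter_subset_right
      · exact Set.empty_subset _
    have h2 : G n ⊆ {ω | exitTime X k ω = (n : ℕ∞)} := by
      simp only [hG]; split_ifs
      · exact Set.inter_subset_right
      · exact Set.empty_subset _
    refine Set.disjoint_of_subset h1 h2 ?_
    rw [Set.disjoint_left]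
    intro ω hωm hωn
    simp only [Set.mem_setOf_eq] at hωm hωn
    rw [hωm] at hωn
    exact hmn (by exact_mod_cast hωn)
  have hmain : P (f ⁻¹' E ∩ exitTime X k ⁻¹' T) = P (⋃ n, G n) := by
    refine measure_eq_of_null _ _ {ω | exitTime X k ω = ⊤}
      (exit_top_null hp hp1 hX k hk) ?_ ?_
    · rintro ω ⟨hωE, hωT⟩
      cases hσ : exitTime X k ω with
      | top => exact Or.inr hσ
      | coe n =>
        left
        refine Set.mem_iUnion.mpr ⟨n, ?_⟩
        simp only [hG]
        rw [if_pos (by rw [← hσ]; exact hωT)]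
        exact ⟨hωE, hσ⟩
    · intro ω hω
      obtain ⟨n, hn⟩ := Set.mem_iUnion.mp hω
      simp only [hG] at hn
      by_cases hT : (n : ℕ∞) ∈ T
      · rw [if_pos hT] at hn
        obtain ⟨h1, h2⟩ := hn
        simp only [Set.mem_setOf_eq] at h2
        exact Or.inl ⟨h1, by rw [Set.mem_preimage, h2]; exact hT⟩
      · rw [if_neg hT] at hn; exact absurd hn (Set.notMem_empty _)
  rw [hmain, measure_iUnion hGdisj hGmeas]
  refine tsum_congr fun n => ?_
  simp only [hG]
  split_ifs <;> simp

end RWExitAux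

/-- Independence of exit position and exit time for biased random walk:
for `p ∈ (0,1)` and a positive integer `k`, under the law of the `p`-biased walk the exit
position `S_σ` and the exit time `σ = inf {n : S_n = ±k}` are independent. -/
theorem rw_exit_position_time_independent
    {Ω : Type*} [MeasurableSpace Ω] (P : Measure Ω) [IsProbabilityMeasure P]
    (X : ℕ → Ω → ℤ) {p : ℝ} (hp : 0 < p) (hp1 : p < 1)
    (hX : IsBiasedWalkSteps P X p) (k : ℕ) (hk : 0 < k) :
    IndepFun (fun ω => walk X (exitTime X k ω).toNat ω) (fun ω => exitTime X k ω) P := by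
  classical
  rw [indepFun_iff_measure_inter_preimage_eq_mul]
  intro E T hE hT
  set c := (ENNReal.ofReal p)^k with hc
  set d := (ENNReal.ofReal (1-p))^k with hd
  set α : ℕ → ℝ≥0∞ := fun n => P (RWExitAux.EV X k n (k:ℤ)) with hα
  set β : ℕ → ℝ≥0∞ := fun n => P (RWExitAux.EV X k n (-(k:ℤ))) with hβ
  set γ : ℕ → ℝ≥0∞ := fun n => P {ω | exitTime X k ω = (n:ℕ∞)} with hγ
  have hαβ : ∀ n, α n * d = β n * c := fun n => RWExitAux.alpha_beta hp hp1 hX k n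
  have hγeq : ∀ n, γ n = α n + β n := by
    intro n
    simp only [hγ, hα, hβ]
    rw [RWExitAux.EV_union (X := X) (k := k) n,
      measure_union (RWExitAux.EV_disj hk n) (RWExitAux.EV_measurable hX.1 k n _)]
  set e1 : ℝ≥0∞ := if (k:ℤ) ∈ E then 1 else 0 with he1
  set e2 : ℝ≥0∞ := if -(k:ℤ) ∈ E then 1 else 0 with he2
  have h1 : ∀ n, α n * (c + d) = γ n * c := by
    intro n; rw [mul_add, hαβ n, hγeq n, add_mul]
  have h2 : ∀ n, β n * (c + d) = γ n * d := by
    intro n; rw [mul_add, ← hαβ n, hγeq n, add_mul]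
  have hkey : ∀ n, (c + d) * (e1 * α n + e2 * β n) = (e1 * c + e2 * d) * γ n := by
    intro n
    calc (c + d) * (e1 * α n + e2 * β n)
        = e1 * (α n * (c + d)) + e2 * (β n * (c + d)) := by ring
      _ = e1 * (γ n * c) + e2 * (γ n * d) := by rw [h1 n, h2 n]
      _ = (e1 * c + e2 * d) * γ n := by ring
  have hDn : ∀ n : ℕ, P ((fun ω => walk X (exitTime X k ω).toNat ω) ⁻¹' E
      ∩ {ω | exitTime X k ω = (n : ℕ∞)}) = e1 * α n + e2 * β n :=
    fun n => RWExitAux.D_prob hX hk E n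
  -- the three tsum identities
  have hfT := RWExitAux.tsum_decomp hp hp1 hX hk E hE T
  have hfU := RWExitAux.tsum_decomp hp hp1 hX hk E hE Set.univ
  have hσT := RWExitAux.tsum_decomp hp hp1 hX hk Set.univ MeasurableSet.univ T
  have hσU := RWExitAux.tsum_decomp hp hp1 hX hk Set.univ MeasurableSet.univ Set.univ
  simp only [Set.preimage_univ, Set.univ_inter, Set.inter_univ, Set.mem_univ, if_true] at hfU hσT hσU
  have hγn : ∀ n : ℕ, P {ω | exitTime X k ω = (n : ℕ∞)} = γ n := fun n => rfl
  rw [measure_univ] at hσU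
  -- goal restated
  rw [hfT, hfU, hσT]
  simp only [hDn, hγn]
  -- cancel (c+d)
  have hc0 : c ≠ 0 := pow_ne_zero _ (by simp [ENNReal.ofReal_eq_zero, not_le, hp])
  have hcd0 : c + d ≠ 0 := by
    intro h
    exact hc0 (add_eq_zero.mp h).1
  have hcdT : c + d ≠ ⊤ :=
    ENNReal.add_ne_top.mpr ⟨ENNReal.pow_ne_top ENNReal.ofReal_ne_top,
      ENNReal.pow_ne_top ENNReal.ofReal_ne_top⟩
  rw [← ENNReal.mul_right_inj hcd0 hcdT]
  have hγsum : (∑' n : ℕ, γ n) = 1 := by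
    rw [← hσU]
  calc (c + d) * ∑' n : ℕ, (if (n:ℕ∞) ∈ T then e1 * α n + e2 * β n else 0)
      = ∑' n : ℕ, (c + d) * (if (n:ℕ∞) ∈ T then e1 * α n + e2 * β n else 0) :=
        (ENNReal.tsum_mul_left).symm
    _ = ∑' n : ℕ, (if (n:ℕ∞) ∈ T then (e1 * c + e2 * d) * γ n else 0) := by
        refine tsum_congr fun n => ?_
        rw [mul_ite, mul_zero, hkey n]
    _ = (e1 * c + e2 * d) * ∑' n : ℕ, (if (n:ℕ∞) ∈ T then γ n else 0) := by
        rw [← ENNReal.tsum_mul_left]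
        refine tsum_congr fun n => ?_
        rw [mul_ite, mul_zero]
    _ = ((e1 * c + e2 * d) * ∑' n : ℕ, γ n) * ∑' n : ℕ, (if (n:ℕ∞) ∈ T then γ n else 0) := by
        rw [hγsum, mul_one]
    _ = ((c + d) * ∑' n : ℕ, (e1 * α n + e2 * β n)) * ∑' n : ℕ, (if (n:ℕ∞) ∈ T then γ n else 0) := by
        congr 1
        rw [← ENNReal.tsum_mul_left, ← ENNReal.tsum_mul_left]
        exact tsum_congr fun n => (hkey n).symm
    _ = (c + d) * ((∑' n : ℕ, (e1 * α n + e2 * β n)) * ∑' n : ℕ, (if (n:ℕ∞) ∈ T then γ n else 0)) := by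
        rw [mul_assoc]
end
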